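/- Let K be a field, Λ a basic finite-dimensional K-algebra and Λ̃ = Λ ⊗_K K[ε]/(ε²). The induction functor − ⊗_Λ Λ̃ from finitely generated Λ-modules to Λ̃-modules is exact, and if I is an injective Λ-module then the induced module I ⊗_Λ Λ̃ is an injective Λ̃-module; moreover, if I is an indecomposable injective Λ-module then I ⊗_Λ Λ̃ is an indecomposable injective Λ̃-module. -/

import Mathlib

open TrivSqZeroExt

/-- The induced module `M ⊗_Λ Λ̃` over the dual numbers `Λ̃ = Λ ⊗_K K[ε]/(ε²)`,
realized concretely: `(m₁, m₂)` corresponds to `m₁ ⊗ 1 + m₂ ⊗ ε`. -/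
def Induced (Λ : Type*) [Ring Λ] (M : Type*) [AddCommGroup M] [Module Λ M] := M × M

namespace Induced

variable {Λ : Type*} [Ring Λ] {M N : Type*} [AddCommGroup M] [Module Λ M]
  [AddCommGroup N] [Module Λ N]

instance : AddCommGroup (Induced Λ M) := inferInstanceAs (AddCommGroup (M × M))

instance : SMul (DualNumber Λ) (Induced Λ M) :=
  ⟨fun a m => (a.fst • m.1, a.snd • m.1 + a.fst • m.2)⟩

@[simp] lemma smul_def (a : DualNumber Λ) (m : Induced Λ M) :
    a • m = ((a.fst • m.1, a.snd • m.1 + a.fst • m.2) : M × M) := rfl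

@[simp] lemma fst_add' (x y : Induced Λ M) : (x + y).1 = x.1 + y.1 := rfl
@[simp] lemma snd_add' (x y : Induced Λ M) : (x + y).2 = x.2 + y.2 := rfl

instance : Module (DualNumber Λ) (Induced Λ M) :=
  Module.ofMinimalAxioms
    (fun r x y => by
      show (_, _) = ((_, _) + (_, _) : M × M)
      simp [Prod.ext_iff, smul_add, Prod.fst_add, Prod.snd_add]
      exact ⟨rfl, add_add_add_comm _ _ _ _⟩)
    (fun r s x => by
      show (_, _) = ((_, _) + (_, _) : M × M)
      simp [Prod.ext_iff, add_smul, TrivSqZeroExt.fst_add, TrivSqZeroExt.snd_add]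
      exact ⟨rfl, add_add_add_comm _ _ _ _⟩)
    (fun r s x => by
      show (_, _) = (_, _)
      simp [Prod.ext_iff, TrivSqZeroExt.fst_mul, TrivSqZeroExt.snd_mul, mul_smul,
        smul_eq_mul, op_smul_eq_mul, add_smul, smul_add]
      abel)
    (fun x => by
      show (_, _) = _
      simp
      rfl)

/-- The map induced on `M ⊗_Λ Λ̃` by a `Λ`-linear map. -/
def map (f : M →ₗ[Λ] N) : Induced Λ M →ₗ[DualNumber Λ] Induced Λ N where
  toFun m := (f m.1, f m.2)
  map_add' x y := by
    show ((_,_) : N × N) = (_,_)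
    simp [Prod.ext_iff, Prod.fst_add, Prod.snd_add]
  map_smul' a x := by
    show ((_,_) : N × N) = (_,_)
    simp [Prod.ext_iff]

end Induced

/-- A module is indecomposable if it is nonzero and admits no nontrivial direct sum
decomposition. -/
def IsIndecomposableModule (R : Type*) [Ring R] (M : Type*) [AddCommGroup M] [Module R M] :
    Prop :=
  Nontrivial M ∧ ∀ N N' : Submodule R M, IsCompl N N' → N = ⊥ ∨ N' = ⊥

section AuxLemmas

open TrivSqZeroExt DualNumber

variable {Λ : Type} [Ring Λ] {I : Type} [AddCommGroup I] [Module Λ I]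

private lemma eps_mul_eq' (a : DualNumber Λ) :
    (ε : DualNumber Λ) * a = (inl a.fst : DualNumber Λ) * ε := by
  ext
  · simp
  · simp

private lemma smul_decomp' (a : DualNumber Λ) {Y : Type} [AddCommGroup Y]
    [Module (DualNumber Λ) Y] (y : Y) :
    a • y = (inl a.fst : DualNumber Λ) • y
      + (inl a.snd : DualNumber Λ) • ((ε : DualNumber Λ) • y) := by
  have h1 : (inl a.snd : DualNumber Λ) * ε = inr a.snd := by ext <;> simp
  rw [← mul_smul, h1, ← add_smul, inl_fst_add_inr_snd_eq]

private lemma induced_injective' (hI : Module.Injective Λ I) :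
    Module.Injective (DualNumber Λ) (Induced Λ I) := by
  constructor
  intro X Y _ _ _ _ f hf g
  letI : Module Λ X := Module.compHom X (inlHom Λ Λ)
  letI : Module Λ Y := Module.compHom Y (inlHom Λ Λ)
  have smulX : ∀ (r : Λ) (x : X), r • x = (inl r : DualNumber Λ) • x := fun _ _ => rfl
  have smulY : ∀ (r : Λ) (y : Y), r • y = (inl r : DualNumber Λ) • y := fun _ _ => rfl
  let f' : X →ₗ[Λ] Y :=
    { toFun := f
      map_add' := f.map_add
      map_smul' := fun r x => by
        simp only [smulX, smulY, RingHom.id_apply, f.map_smul] }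
  let g₂ : X →ₗ[Λ] I :=
    { toFun := fun x => (g x).2
      map_add' := fun x y => by
        show (g (x + y)).2 = (g x).2 + (g y).2
        rw [g.map_add]; rfl
      map_smul' := fun r x => by
        show (g (r • x)).2 = r • (g x).2
        have hg : g ((inl r : DualNumber Λ) • x) = (inl r : DualNumber Λ) • g x :=
          g.map_smul _ x
        rw [smulX, hg, Induced.smul_def]
        simp }
  obtain ⟨h, hh⟩ := hI.out f' hf g₂
  have hlin : ∀ (r : Λ) (y : Y), h ((inl r : DualNumber Λ) • y) = r • h y := fun r y => by
    rw [← smulY]; exact h.map_smul r y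
  refine ⟨{ toFun := fun y => (((h ((ε : DualNumber Λ) • y), h y) : I × I) : Induced Λ I)
            map_add' := fun y y' => by
              show ((_, _) : I × I) = (_, _)
              rw [Prod.mk.injEq]
              constructor
              · rw [smul_add, h.map_add]
              · rw [h.map_add]
            map_smul' := fun a y => by
              show ((_, _) : I × I) = ((a.fst • _, a.snd • _ + a.fst • _) : I × I)
              rw [Prod.mk.injEq]
              constructor
              · rw [← mul_smul, eps_mul_eq', mul_smul, hlin]
              · rw [smul_decomp' a y, h.map_add, hlin, hlin, add_comm] }, ?_⟩
  intro x
  show (((h ((ε : DualNumber Λ) • f x), h (f x)) : I × I) : Induced Λ I) = g x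
  have h2 : h (f x) = (g x).2 := hh x
  have h1 : h ((ε : DualNumber Λ) • f x) = (g x).1 := by
    rw [← f.map_smul]
    have hx : (g ((ε : DualNumber Λ) • x) : I × I).2 = (g x).1 := by
      have hg : g ((ε : DualNumber Λ) • x) = (ε : DualNumber Λ) • g x := g.map_smul _ x
      rw [hg, Induced.smul_def]
      simp
    exact (hh ((ε : DualNumber Λ) • x)).trans hx
  rw [h1, h2]
  rfl

private def pr {Λ : Type} [Ring Λ] {I : Type} [AddCommGroup I] [Module Λ I]
    (x y : I) : Induced Λ I := ((x, y) : I × I)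

private lemma induced_indecomposable' (hI : IsIndecomposableModule Λ I) :
    IsIndecomposableModule (DualNumber Λ) (Induced Λ I) := by
  obtain ⟨hnt, hsplit⟩ := hI
  refine ⟨inferInstanceAs (Nontrivial (I × I)), ?_⟩
  intro N N' hc
  set e : Induced Λ I →ₗ[DualNumber Λ] Induced Λ I :=
    N.subtype ∘ₗ N.projectionOnto N' hc with he
  have heN : ∀ z : Induced Λ I, z ∈ N → e z = z := fun z hz => by
    rw [he]
    show N.subtype (N.projectionOnto N' hc z) = z
    have h2 : N.projectionOnto N' hc z = ⟨z, hz⟩ := by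
      have h3 := Submodule.linearProjOfIsCompl_apply_left hc (⟨z, hz⟩ : N)
      simpa using h3
    rw [h2]
    rfl
  have heN' : ∀ z : Induced Λ I, z ∈ N' → e z = 0 := fun z hz => by
    rw [he]
    show N.subtype (N.projectionOnto N' hc z) = 0
    rw [Submodule.linearProjOfIsCompl_apply_right' hc hz]
    rfl
  have hee : ∀ z, e (e z) = e z := fun z => by
    have hz : e z ∈ N := by rw [he]; exact (N.projectionOnto N' hc z).2
    exact heN (e z) hz
  have hsm : ∀ (r : Λ) (z : Induced Λ I),
      (inl r : DualNumber Λ) • z = pr (r • z.1) (r • z.2) := by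
    intro r z
    rw [Induced.smul_def]
    show ((_, _) : I × I) = ((_, _) : I × I)
    simp
  have hpr : ∀ (r : Λ) (m : I),
      pr (r • m) (0 : I) = (inl r : DualNumber Λ) • (pr m (0 : I) : Induced Λ I) := by
    intro r m
    rw [hsm]
    show pr (r • m) (0 : I) = pr (r • m) (r • (0 : I))
    rw [smul_zero]
  have hpa : ∀ m m' : I,
      pr (m + m') (0 : I) = (pr m (0 : I) : Induced Λ I) + pr m' (0 : I) := by
    intro m m'
    show ((m + m', (0:I)) : I × I) = ((m + m', 0 + 0) : I × I)
    rw [add_zero]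
  let a : I →ₗ[Λ] I :=
    { toFun := fun m => (e (pr m 0)).1
      map_add' := fun m m' => by
        show (e (pr (m + m') (0:I))).1 = (e (pr m (0:I))).1 + (e (pr m' (0:I))).1
        rw [hpa, e.map_add]; rfl
      map_smul' := fun r m => by
        show (e (pr (r • m) (0:I))).1 = r • (e (pr m (0:I))).1
        rw [hpr, e.map_smul, hsm]
        rfl }
  let b : I →ₗ[Λ] I :=
    { toFun := fun m => (e (pr m 0)).2
      map_add' := fun m m' => by
        show (e (pr (m + m') (0:I))).2 = (e (pr m (0:I))).2 + (e (pr m' (0:I))).2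
        rw [hpa, e.map_add]; rfl
      map_smul' := fun r m => by
        show (e (pr (r • m) (0:I))).2 = r • (e (pr m (0:I))).2
        rw [hpr, e.map_smul, hsm]
        rfl }
  have heps : ∀ z : Induced Λ I,
      (ε : DualNumber Λ) • z = pr (0 : I) z.1 := by
    intro z
    rw [Induced.smul_def]
    show ((_, _) : I × I) = ((_, _) : I × I)
    simp
  -- general formula for e
  have hgen : ∀ z : Induced Λ I, e z = pr (a z.1) (b z.1 + a z.2) := by
    intro z
    have hz : z = pr z.1 (0 : I) + (ε : DualNumber Λ) • pr z.2 (0 : I) := by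
      rw [heps]
      show z = ((z.1 + 0, 0 + z.2) : I × I)
      rw [add_zero, zero_add]
      rfl
    calc e z = e (pr z.1 (0 : I) + (ε : DualNumber Λ) • pr z.2 (0 : I)) := by rw [← hz]
      _ = e (pr z.1 (0 : I)) + (ε : DualNumber Λ) • e (pr z.2 (0 : I)) := by
          rw [e.map_add, e.map_smul]
      _ = pr (a z.1) (b z.1 + a z.2) := by
          rw [heps]
          show (((e (pr z.1 (0:I))).1 + 0, (e (pr z.1 (0:I))).2 + (e (pr z.2 (0:I))).1) : I × I)
            = ((a z.1, b z.1 + a z.2) : I × I)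
          rw [add_zero]
          rfl
  have hgen1 : ∀ m : I, e (pr m (0 : I)) = pr (a m) (b m) := by
    intro m
    rw [hgen (pr m (0 : I))]
    show (pr (a m) (b m + a (0 : I)) : Induced Λ I) = pr (a m) (b m)
    rw [map_zero, add_zero]
  have hmain : ∀ m : I, (pr (a (a m)) (b (a m) + a (b m)) : Induced Λ I) = pr (a m) (b m) := by
    intro m
    calc (pr (a (a m)) (b (a m) + a (b m)) : Induced Λ I)
        = e (pr (a m) (b m)) := (hgen (pr (a m) (b m))).symm
      _ = e (e (pr m (0 : I))) := by rw [hgen1]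
      _ = e (pr m (0 : I)) := hee _
      _ = pr (a m) (b m) := hgen1 m
  have haa : ∀ m, a (a m) = a m := fun m => by
    have h1 := congrArg (fun z : Induced Λ I => z.1) (hmain m)
    exact h1
  have hba : ∀ m, b (a m) + a (b m) = b m := fun m => by
    have h1 := congrArg (fun z : Induced Λ I => z.2) (hmain m)
    exact h1
  have hcompl : IsCompl (LinearMap.range a) (LinearMap.ker a) := by
    constructor
    · rw [disjoint_iff, eq_bot_iff]
      intro x hx
      obtain ⟨⟨y, hy⟩, hx2⟩ := Submodule.mem_inf.mp hx
      have hax : a x = x := by rw [← hy, haa]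
      rw [Submodule.mem_bot, ← hax, LinearMap.mem_ker.mp hx2]
    · rw [codisjoint_iff, eq_top_iff]
      intro x _
      have hx : x = a x + (x - a x) := by abel
      rw [hx]
      refine Submodule.add_mem_sup ⟨x, rfl⟩ ?_
      simp [LinearMap.mem_ker, map_sub, haa x]
  rcases hsplit _ _ hcompl with h | h
  · -- a = 0, hence e = 0, hence N = ⊥
    have ha0 : ∀ m, a m = 0 := fun m => by
      have hm : a m ∈ LinearMap.range a := ⟨m, rfl⟩
      rw [h] at hm
      exact hm
    have hb0 : ∀ m, b m = 0 := fun m => by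
      have hm := hba m
      rw [ha0 m, map_zero, ha0 (b m), add_zero] at hm
      exact hm.symm
    left
    rw [eq_bot_iff]
    intro n hn
    have hn0 := heN n hn
    rw [hgen n, ha0, ha0, hb0] at hn0
    have hz : (0 : Induced Λ I) = n := by
      rw [← hn0]
      show ((0, (0:I)) : I × I) = ((0, 0 + 0) : I × I)
      rw [add_zero]
    rw [Submodule.mem_bot, ← hz]
  · -- ker a = ⊥, hence a = id, b = 0, e = id, hence N' = ⊥
    have ha1 : ∀ m, a m = m := fun m => by
      have h0 : a (a m - m) = 0 := by rw [map_sub, haa, sub_self]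
      have hm : a m - m ∈ LinearMap.ker a := LinearMap.mem_ker.mpr h0
      rw [h, Submodule.mem_bot, sub_eq_zero] at hm
      exact hm
    have hb0 : ∀ m, b m = 0 := fun m => by
      have hm := hba m
      rw [ha1 (b m), ha1 m] at hm
      have h1 : b m + b m - b m = b m - b m := by rw [hm]
      rw [add_sub_cancel_right, sub_self] at h1
      exact h1
    have heid : ∀ z, e z = z := fun z => by
      rw [hgen z, ha1, ha1, hb0, zero_add]
      rfl
    right
    rw [eq_bot_iff]
    intro n hn
    have hn0 := heN' n hn
    rw [heid n] at hn0
    rw [Submodule.mem_bot, hn0]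

end AuxLemmas

/-- Let `K` be a field, `Λ` a (basic) finite-dimensional `K`-algebra and
`Λ̃ = Λ ⊗_K K[ε]/(ε²)` (realized as the dual numbers over `Λ`).  The induction functor
`- ⊗_Λ Λ̃` from finitely generated `Λ`-modules to `Λ̃`-modules is exact (it sends short exact
sequences to short exact sequences), it sends injective `Λ`-modules to injective `Λ̃`-modules,
and it sends indecomposable injective `Λ`-modules to indecomposable injective `Λ̃`-modules. -/
theorem induction_functor_exact_preserves_injectives
    (K : Type) [Field K] [IsAlgClosed K]
    (Λ : Type) [Ring Λ] [Algebra K Λ] [FiniteDimensional K Λ] :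
    (∀ (A B C : Type) [AddCommGroup A] [AddCommGroup B] [AddCommGroup C]
        [Module Λ A] [Module Λ B] [Module Λ C]
        [Module.Finite Λ A] [Module.Finite Λ B] [Module.Finite Λ C]
        (f : A →ₗ[Λ] B) (g : B →ₗ[Λ] C),
        Function.Injective f → Function.Surjective g → Function.Exact f g →
          Function.Injective (Induced.map f) ∧ Function.Surjective (Induced.map g) ∧
            Function.Exact (Induced.map f) (Induced.map g)) ∧
    (∀ (I : Type) [AddCommGroup I] [Module Λ I] [Module.Finite Λ I],
        Module.Injective Λ I → Module.Injective (DualNumber Λ) (Induced Λ I)) ∧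
    (∀ (I : Type) [AddCommGroup I] [Module Λ I] [Module.Finite Λ I],
        Module.Injective Λ I → IsIndecomposableModule Λ I →
          Module.Injective (DualNumber Λ) (Induced Λ I) ∧
            IsIndecomposableModule (DualNumber Λ) (Induced Λ I)) := by
  refine ⟨?_, ?_, ?_⟩
  · intro A B C _ _ _ _ _ _ _ _ _ f g hf hg hfg
    refine ⟨?_, ?_, ?_⟩
    · intro x y hxy
      have hxy' : ((f x.1, f x.2) : B × B) = ((f y.1, f y.2) : B × B) := hxy
      obtain ⟨h1, h2⟩ := Prod.mk.injEq _ _ _ _ ▸ hxy'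
      exact Prod.ext (hf h1) (hf h2)
    · intro c
      obtain ⟨x1, hx1⟩ := hg (c.1 : C)
      obtain ⟨x2, hx2⟩ := hg (c.2 : C)
      refine ⟨((x1, x2) : B × B), ?_⟩
      show ((g x1, g x2) : Induced Λ C) = c
      rw [hx1, hx2]
      rfl
    · intro y
      constructor
      · intro h
        have h' : ((g y.1, g y.2) : C × C) = ((0, 0) : C × C) := h
        obtain ⟨h1, h2⟩ := Prod.mk.injEq _ _ _ _ ▸ h'
        obtain ⟨x1, hx1⟩ := (hfg y.1).mp h1
        obtain ⟨x2, hx2⟩ := (hfg y.2).mp h2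
        refine ⟨((x1, x2) : A × A), ?_⟩
        show ((f x1, f x2) : Induced Λ B) = y
        rw [hx1, hx2]
        rfl
      · rintro ⟨x, rfl⟩
        show ((g (f x.1), g (f x.2)) : C × C) = ((0, 0) : C × C)
        rw [(hfg (f x.1)).mpr ⟨x.1, rfl⟩, (hfg (f x.2)).mpr ⟨x.2, rfl⟩]
  · intro I _ _ _ hI
    exact induced_injective' hI
  · intro I _ _ _ hI hInd
    exact ⟨induced_injective' hI, induced_indecomposable' hInd⟩
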